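/- Contracting a path of degree-2 vertices does not increase carving width: if G' is obtained from G by contracting an edge one of whose endpoints has degree at most 2, then the carving width of G' is at most the carving width of G. -/

import Mathlib

open scoped Classical

noncomputable section

/-- A tree decomposition of a graph `G`: a tree `tree` with bags of vertices of `G`
attached to its nodes, covering all vertices and edges, such that for each vertex `v`
of `G` the set of tree nodes whose bag contains `v` induces a connected subtree. -/
structure TreeDecomp {V : Type} (G : SimpleGraph V) where
  τ : Type
  tree : SimpleGraph τ
  isTree : tree.IsTree
  bag : τ → Finset V
  bag_vertex : ∀ v : V, ∃ t, v ∈ bag t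
  bag_edge : ∀ ⦃u v : V⦄, G.Adj u v → ∃ t, u ∈ bag t ∧ v ∈ bag t
  bag_connected : ∀ v : V, (tree.induce {t | v ∈ bag t}).Connected

/-- A tree decomposition has width at most `w` if every bag has at most `w + 1`
vertices. -/
def TreeDecomp.widthLE {V : Type} {G : SimpleGraph V} (T : TreeDecomp G) (w : ℕ) :
    Prop :=
  ∀ t, (T.bag t).card ≤ w + 1

/-- A branch decomposition of a graph `G`: a tree whose leaves (vertices with a unique
neighbor) are in bijection with the edges of `G`. -/
structure BranchDecomp {V : Type} (G : SimpleGraph V) where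
  τ : Type
  tree : SimpleGraph τ
  isTree : tree.IsTree
  leafEquiv : G.edgeSet ≃ {t : τ // ∃! s, tree.Adj t s}

namespace BranchDecomp

variable {V : Type} {G : SimpleGraph V}

/-- The set of edges of `G` whose leaves end up on the side of `t₁` after removing the
tree edge `{t₁, t₂}`. -/
def side (B : BranchDecomp G) (t₁ t₂ : B.τ) : Set G.edgeSet :=
  {e | (B.tree.deleteEdges {s(t₁, t₂)}).Reachable (B.leafEquiv e).val t₁}

/-- The separator of a tree edge `{t₁, t₂}`: the vertices of `G` incident both to an
edge on the `t₁` side and to an edge on the `t₂` side. -/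
def sep (B : BranchDecomp G) (t₁ t₂ : B.τ) : Set V :=
  {v | (∃ e ∈ B.side t₁ t₂, v ∈ (e : Sym2 V)) ∧
       (∃ e : G.edgeSet, e ∉ B.side t₁ t₂ ∧ v ∈ (e : Sym2 V))}

/-- A branch decomposition has width at most `w` if all separators have at most `w`
vertices. -/
def widthLE (B : BranchDecomp G) (w : ℕ) : Prop :=
  ∀ t₁ t₂, B.tree.Adj t₁ t₂ → (B.sep t₁ t₂).ncard ≤ w

end BranchDecomp

/-- The branchwidth of `G`: the least width of a branch decomposition of `G`. -/
noncomputable def branchWidth {V : Type} (G : SimpleGraph V) : ℕ :=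
  sInf {w | ∃ B : BranchDecomp G, B.widthLE w}

/-- A carving decomposition of a graph `G`: a tree whose leaves (vertices with a unique
neighbor) are in bijection with the vertices of `G`. -/
structure CarvingDecomp {V : Type} (G : SimpleGraph V) where
  τ : Type
  tree : SimpleGraph τ
  isTree : tree.IsTree
  leafEquiv : V ≃ {t : τ // ∃! s, tree.Adj t s}

namespace CarvingDecomp

variable {V : Type} {G : SimpleGraph V}

/-- The set of vertices of `G` whose leaves end up on the side of `t₁` after removing
the tree edge `{t₁, t₂}`. -/
def side (C : CarvingDecomp G) (t₁ t₂ : C.τ) : Set V :=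
  {v | (C.tree.deleteEdges {s(t₁, t₂)}).Reachable (C.leafEquiv v).val t₁}

/-- The number of edges of `G` crossing the bipartition of `V(G)` induced by the tree
edge `{t₁, t₂}`. -/
noncomputable def crossWidth (C : CarvingDecomp G) (t₁ t₂ : C.τ) : ℕ :=
  {e : Sym2 V | e ∈ G.edgeSet ∧
    ∃ u w, e = s(u, w) ∧ u ∈ C.side t₁ t₂ ∧ w ∉ C.side t₁ t₂}.ncard

/-- A carving decomposition has width at most `w` if at most `w` edges cross every
induced bipartition. -/
def widthLE (C : CarvingDecomp G) (w : ℕ) : Prop :=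
  ∀ t₁ t₂, C.tree.Adj t₁ t₂ → C.crossWidth t₁ t₂ ≤ w

end CarvingDecomp

/-- The carving width of `G`: the least width of a carving decomposition of `G`. -/
noncomputable def carvingWidth {V : Type} (G : SimpleGraph V) : ℕ :=
  sInf {w | ∃ C : CarvingDecomp G, C.widthLE w}

/-- The graph obtained from `G` by contracting the edge `{u, v}`: the vertex `u` is
removed, and its remaining incident edges are transferred to `v`. -/
def contractEdge {V : Type} (G : SimpleGraph V) (u v : V) :
    SimpleGraph {x : V // x ≠ u} :=
  SimpleGraph.fromRel fun a b =>
    G.Adj a.val b.val ∨ (a.val = v ∧ G.Adj u b.val) ∨ (b.val = v ∧ G.Adj u a.val)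


open SimpleGraph


lemma reach_of_pseudoHom {α β : Type*} {G : SimpleGraph α} {H : SimpleGraph β}
    (f : α → β) (hf : ∀ x y, G.Adj x y → H.Adj (f x) (f y) ∨ f x = f y)
    {x y : α} (h : G.Reachable x y) : H.Reachable (f x) (f y) := by
  obtain ⟨p⟩ := h
  induction p with
  | nil => exact Reachable.refl _
  | cons ha p ih =>
      rcases hf _ _ ha with h' | h'
      · exact (h'.reachable).trans ih
      · rw [h']; exact ih

def glue {α β : Type*} (G₁ : SimpleGraph α) (G₂ : SimpleGraph β) (a : α) (b : β) :
    SimpleGraph (α ⊕ β) :=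
  SimpleGraph.fromRel (fun x y => match x, y with
    | .inl p, .inl q => G₁.Adj p q
    | .inr p, .inr q => G₂.Adj p q
    | .inl p, .inr q => p = a ∧ q = b
    | .inr _, .inl _ => False)

variable {α β : Type*} {G₁ : SimpleGraph α} {G₂ : SimpleGraph β} {a : α} {b : β}

@[simp] lemma glue_adj_inl_inl {p q : α} :
    (glue G₁ G₂ a b).Adj (.inl p) (.inl q) ↔ G₁.Adj p q := by
  simp only [glue, fromRel_adj]
  constructor
  · rintro ⟨-, h | h⟩ <;> [exact h; exact h.symm]
  · exact fun h => ⟨by simpa using h.ne, Or.inl h⟩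

@[simp] lemma glue_adj_inr_inr {p q : β} :
    (glue G₁ G₂ a b).Adj (.inr p) (.inr q) ↔ G₂.Adj p q := by
  simp only [glue, fromRel_adj]
  constructor
  · rintro ⟨-, h | h⟩ <;> [exact h; exact h.symm]
  · exact fun h => ⟨by simpa using h.ne, Or.inl h⟩

@[simp] lemma glue_adj_inl_inr {p : α} {q : β} :
    (glue G₁ G₂ a b).Adj (.inl p) (.inr q) ↔ p = a ∧ q = b := by
  simp only [glue, fromRel_adj]
  constructor
  · rintro ⟨-, h | h⟩ <;> [exact h; exact h.elim]
  · rintro ⟨rfl, rfl⟩; exact ⟨by simp, Or.inl ⟨rfl, rfl⟩⟩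

@[simp] lemma glue_adj_inr_inl {p : β} {q : α} :
    (glue G₁ G₂ a b).Adj (.inr p) (.inl q) ↔ q = a ∧ p = b := by
  rw [adj_comm, glue_adj_inl_inr]

lemma sdiff_single_adj {γ : Type*} {G : SimpleGraph γ} {e : Sym2 γ} {x y : γ} :
    (G \ fromEdgeSet {e}).Adj x y ↔ G.Adj x y ∧ s(x, y) ≠ e := by
  simp only [sdiff_adj, fromEdgeSet_adj, Set.mem_singleton_iff, not_and, not_not]
  constructor
  · rintro ⟨h, h2⟩
    exact ⟨h, fun hc => h.ne (h2 hc)⟩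
  · rintro ⟨h, h2⟩
    exact ⟨h, fun hc => absurd hc h2⟩

lemma glue_isTree (h₁ : G₁.IsTree) (h₂ : G₂.IsTree) : (glue G₁ G₂ a b).IsTree := by
  constructor
  · -- connected
    have key : ∀ x : α ⊕ β, (glue G₁ G₂ a b).Reachable x (.inl a) := by
      rintro (p | q)
      · exact reach_of_pseudoHom Sum.inl (fun x y h => Or.inl (glue_adj_inl_inl.mpr h))
          (h₁.isConnected p a)
      · refine Reachable.trans ?_ (Adj.reachable (glue_adj_inr_inl.mpr ⟨rfl, rfl⟩))
        exact reach_of_pseudoHom Sum.inr (fun x y h => Or.inl (glue_adj_inr_inr.mpr h))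
          (h₂.isConnected q b)
    exact (connected_iff_exists_forall_reachable _).mpr ⟨Sum.inl a, fun w => (key w).symm⟩
  · -- acyclic
    rw [isAcyclic_iff_forall_adj_isBridge]
    rintro (p | p) (q | q) hadj <;> rw [isBridge_iff, deleteEdges] <;> refine fun hreach => ?_
    · -- inl inl
      have hpq : G₁.Adj p q := glue_adj_inl_inl.mp hadj
      have hbr := (isAcyclic_iff_forall_adj_isBridge.mp h₁.IsAcyclic) hpq
      refine (show ¬ (G₁ \ fromEdgeSet {s(p, q)}).Reachable p q from isBridge_iff.mp hbr) ?_
      refine reach_of_pseudoHom (Sum.elim id fun _ => a) ?_ hreach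
      rintro (x | x) (y | y) hxy <;> rw [sdiff_single_adj] at hxy ⊢
      · refine Or.inl ⟨glue_adj_inl_inl.mp hxy.1, fun hc => hxy.2 ?_⟩
        simpa using congrArg (Sym2.map (Sum.inl : α → α ⊕ β)) hc
      · exact Or.inr (by simpa using (glue_adj_inl_inr.mp hxy.1).1)
      · exact Or.inr (by simpa using ((glue_adj_inr_inl.mp hxy.1).1).symm)
      · exact Or.inr rfl
    · -- inl inr : the bridge edge itself
      obtain ⟨rfl, rfl⟩ := glue_adj_inl_inr.mp hadj
      have : (⊥ : SimpleGraph Bool).Reachable false true := by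
        refine reach_of_pseudoHom (Sum.elim (fun _ => false) fun _ => true) ?_ hreach
        rintro (x | x) (y | y) hxy <;> rw [sdiff_single_adj] at hxy
        · exact Or.inr rfl
        · obtain ⟨rfl, rfl⟩ := glue_adj_inl_inr.mp hxy.1
          exact absurd rfl hxy.2
        · obtain ⟨rfl, rfl⟩ := glue_adj_inr_inl.mp hxy.1
          exact absurd (Sym2.eq_swap) hxy.2
        · exact Or.inr rfl
      simp at this
    · -- inr inl
      obtain ⟨rfl, rfl⟩ := glue_adj_inr_inl.mp hadj
      have : (⊥ : SimpleGraph Bool).Reachable true false := by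
        refine reach_of_pseudoHom (Sum.elim (fun _ => false) fun _ => true) ?_ hreach
        rintro (x | x) (y | y) hxy <;> rw [sdiff_single_adj] at hxy
        · exact Or.inr rfl
        · obtain ⟨rfl, rfl⟩ := glue_adj_inl_inr.mp hxy.1
          exact absurd (Sym2.eq_swap) hxy.2
        · obtain ⟨rfl, rfl⟩ := glue_adj_inr_inl.mp hxy.1
          exact absurd rfl hxy.2
        · exact Or.inr rfl
      simp at this
    · -- inr inr
      have hpq : G₂.Adj p q := glue_adj_inr_inr.mp hadj
      have hbr := (isAcyclic_iff_forall_adj_isBridge.mp h₂.IsAcyclic) hpq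
      refine (show ¬ (G₂ \ fromEdgeSet {s(p, q)}).Reachable p q from isBridge_iff.mp hbr) ?_
      refine reach_of_pseudoHom (Sum.elim (fun _ => b) id) ?_ hreach
      rintro (x | x) (y | y) hxy <;> rw [sdiff_single_adj] at hxy ⊢
      · exact Or.inr rfl
      · exact Or.inr (by simpa using ((glue_adj_inl_inr.mp hxy.1).2).symm)
      · exact Or.inr (by simpa using (glue_adj_inr_inl.mp hxy.1).2)
      · refine Or.inl ⟨glue_adj_inr_inr.mp hxy.1, fun hc => hxy.2 ?_⟩
        simpa using congrArg (Sym2.map (Sum.inr : β → α ⊕ β)) hc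

def ray : SimpleGraph ℕ := SimpleGraph.fromRel (fun m n => n = m + 1)

@[simp] lemma ray_adj {m n : ℕ} : ray.Adj m n ↔ n = m + 1 ∨ m = n + 1 := by
  simp only [ray, fromRel_adj]
  constructor
  · rintro ⟨-, h⟩; exact h
  · intro h; exact ⟨by omega, h⟩

lemma ray_aux (m : ℕ) : ¬ (ray \ fromEdgeSet {s(m, m + 1)}).Reachable m (m + 1) := by
  intro h
  have : (⊥ : SimpleGraph Bool).Reachable (decide (m ≤ m)) (decide (m + 1 ≤ m)) := by
    refine reach_of_pseudoHom (fun k => decide (k ≤ m)) ?_ h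
    intro x y hxy
    rw [sdiff_single_adj] at hxy
    obtain ⟨hadj, hne⟩ := hxy
    rcases ray_adj.mp hadj with rfl | rfl <;> refine Or.inr (decide_eq_decide.mpr ?_)
    · have : x ≠ m := fun hc => hne (by rw [hc])
      omega
    · have : y ≠ m := fun hc => hne (by rw [hc, Sym2.eq_swap])
      omega
  rw [reachable_bot] at this
  simp at this

lemma ray_isTree : ray.IsTree := by
  constructor
  · refine (connected_iff_exists_forall_reachable _).mpr ⟨0, fun w => ?_⟩
    induction w with
    | zero => exact Reachable.refl _
    | succ n ih => exact ih.trans (Adj.reachable (by simp))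
  · rw [isAcyclic_iff_forall_adj_isBridge]
    intro m n hadj
    rw [isBridge_iff]
    refine ?_
    rcases ray_adj.mp hadj with rfl | rfl
    · exact ray_aux m
    · rw [Sym2.eq_swap]
      exact fun h => ray_aux n h.symm

section
variable {α β : Type*} {G₁ : SimpleGraph α} {G₂ : SimpleGraph β} {a : α} {b : β}
-- leaf characterization for glue with a ray
lemma glue_ray_leaf {T : SimpleGraph α} {a₀ : α} (ha₀ : ∃ s, T.Adj a₀ s) (t : α ⊕ ℕ) :
    (∃! s, (glue T ray a₀ 0).Adj t s) ↔
      ∃ p, t = Sum.inl p ∧ p ≠ a₀ ∧ (∃! s, T.Adj p s) := by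
  obtain ⟨s₀, hs₀⟩ := ha₀
  cases t with
  | inl p =>
      constructor
      · rintro ⟨s, hs, hu⟩
        have hpa : p ≠ a₀ := by
          rintro rfl
          have h1 : (glue T ray p 0).Adj (.inl p) (.inr 0) := glue_adj_inl_inr.mpr ⟨rfl, rfl⟩
          have h2 : (glue T ray p 0).Adj (.inl p) (.inl s₀) := glue_adj_inl_inl.mpr hs₀
          have := (hu _ h1).trans (hu _ h2).symm
          simp at this
        cases s with
        | inl q =>
            refine ⟨p, rfl, hpa, q, glue_adj_inl_inl.mp hs, fun q' hq' => ?_⟩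
            have := hu _ (glue_adj_inl_inl.mpr hq')
            simpa using this
        | inr n => exact absurd (glue_adj_inl_inr.mp hs).1 hpa
      · rintro ⟨p', hp, hne, q, hq, huq⟩
        obtain rfl : p = p' := by simpa using hp
        refine ⟨.inl q, glue_adj_inl_inl.mpr hq, ?_⟩
        rintro (q' | n) hs
        · simpa using huq q' (glue_adj_inl_inl.mp hs)
        · exact absurd (glue_adj_inl_inr.mp hs).1 hne
  | inr n =>
      constructor
      · rintro ⟨s, hs, hu⟩
        exfalso
        cases n with
        | zero =>
            have h1 : (glue T ray a₀ 0).Adj (.inr 0) (.inl a₀) := glue_adj_inr_inl.mpr ⟨rfl, rfl⟩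
            have h2 : (glue T ray a₀ 0).Adj (.inr 0) (.inr 1) := glue_adj_inr_inr.mpr (by simp)
            have := (hu _ h1).trans (hu _ h2).symm
            simp at this
        | succ m =>
            have h1 : (glue T ray a₀ 0).Adj (.inr (m+1)) (.inr m) :=
              glue_adj_inr_inr.mpr (by simp)
            have h2 : (glue T ray a₀ 0).Adj (.inr (m+1)) (.inr (m+2)) :=
              glue_adj_inr_inr.mpr (by simp)
            have := (hu _ h1).trans (hu _ h2).symm
            simp at this
      · rintro ⟨p, hp, -⟩
        simp at hp


end

section
variable {α : Type*} {T : SimpleGraph α} {a₀ : α}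

lemma reach_inl_iff {t₁ t₂ x y : α} :
    ((glue T ray a₀ 0).deleteEdges {s(Sum.inl t₁, Sum.inl t₂)}).Reachable (.inl x) (.inl y) ↔
    (T.deleteEdges {s(t₁, t₂)}).Reachable x y := by
  constructor
  · intro h
    have key := reach_of_pseudoHom (H := T.deleteEdges {s(t₁, t₂)})
      (Sum.elim id fun _ => a₀) ?_ h
    · simpa using key
    · rintro (p | p) (q | q) hpq <;> rw [deleteEdges_adj] at hpq
      · refine Or.inl (deleteEdges_adj.mpr ⟨glue_adj_inl_inl.mp hpq.1, fun hc => hpq.2 ?_⟩)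
        simp only [Set.mem_singleton_iff] at hc ⊢
        simpa using congrArg (Sym2.map (Sum.inl : α → α ⊕ ℕ)) hc
      · exact Or.inr (by simpa using (glue_adj_inl_inr.mp hpq.1).1)
      · exact Or.inr (by simpa using ((glue_adj_inr_inl.mp hpq.1).1).symm)
      · exact Or.inr rfl
  · intro h
    refine reach_of_pseudoHom (Sum.inl : α → α ⊕ ℕ) ?_ h
    · intro p q hpq
      rw [deleteEdges_adj] at hpq
      refine Or.inl (deleteEdges_adj.mpr ⟨glue_adj_inl_inl.mpr hpq.1, fun hc => hpq.2 ?_⟩)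
      simp only [Set.mem_singleton_iff] at hc ⊢
      rcases Sym2.eq_iff.mp hc with ⟨h1, h2⟩ | ⟨h1, h2⟩
      · simp_all [Sym2.eq_iff]
      · simp_all [Sym2.eq_iff]

lemma reach_bridge_univ (hconn : T.Connected) (x : α) :
    ((glue T ray a₀ 0).deleteEdges {s(Sum.inl a₀, Sum.inr 0)}).Reachable (.inl x) (.inl a₀) := by
  refine reach_of_pseudoHom (Sum.inl : α → α ⊕ ℕ) ?_ (hconn x a₀)
  intro p q hpq
  refine Or.inl (deleteEdges_adj.mpr ⟨glue_adj_inl_inl.mpr hpq, ?_⟩)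
  simp [Sym2.eq_iff]

lemma not_reach_bridge (x : α) :
    ¬ ((glue T ray a₀ 0).deleteEdges {s(Sum.inr 0, Sum.inl a₀)}).Reachable (.inl x) (.inr 0) := by
  intro h
  have key := reach_of_pseudoHom (H := (⊥ : SimpleGraph Bool))
      (Sum.elim (fun _ => false) fun _ => true) ?_ h
  · rw [reachable_bot] at key; simp at key
  · rintro (p | p) (q | q) hpq <;> rw [deleteEdges_adj] at hpq
    · exact Or.inr rfl
    · obtain ⟨rfl, rfl⟩ := glue_adj_inl_inr.mp hpq.1
      exact absurd (by simp [Sym2.eq_swap]) hpq.2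
    · obtain ⟨rfl, rfl⟩ := glue_adj_inr_inl.mp hpq.1
      exact absurd (by simp) hpq.2
    · exact Or.inr rfl

lemma reach_ray_univ (hconn : T.Connected) (n : ℕ) (x : α) :
    ((glue T ray a₀ 0).deleteEdges {s(Sum.inr n, Sum.inr (n+1))}).Reachable (.inl x) (.inr n) := by
  have h1 : ((glue T ray a₀ 0).deleteEdges {s(Sum.inr n, Sum.inr (n+1))}).Reachable
      (.inl x) (.inl a₀) := by
    refine reach_of_pseudoHom (Sum.inl : α → α ⊕ ℕ) ?_ (hconn x a₀)
    intro p q hpq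
    exact Or.inl (deleteEdges_adj.mpr ⟨glue_adj_inl_inl.mpr hpq, by simp⟩)
  have h2 : ((glue T ray a₀ 0).deleteEdges {s(Sum.inr n, Sum.inr (n+1))}).Adj
      (.inl a₀) (.inr 0) := deleteEdges_adj.mpr ⟨glue_adj_inl_inr.mpr ⟨rfl, rfl⟩, by simp⟩
  have h3 : ∀ d k, k + d = n → ((glue T ray a₀ 0).deleteEdges
      {s(Sum.inr n, Sum.inr (n+1))}).Reachable (.inr k) (.inr n) := by
    intro d
    induction d with
    | zero =>
        intro k hk
        obtain rfl : k = n := by omega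
        exact Reachable.refl _
    | succ d ih =>
        intro k hk
        have hadj : ((glue T ray a₀ 0).deleteEdges {s(Sum.inr n, Sum.inr (n+1))}).Adj
            (.inr k) (.inr (k+1)) := by
          refine deleteEdges_adj.mpr ⟨glue_adj_inr_inr.mpr (by simp), ?_⟩
          simp only [Set.mem_singleton_iff, Sym2.eq_iff]
          rintro (⟨h1, h2⟩ | ⟨h1, h2⟩) <;> simp_all <;> omega
        exact hadj.reachable.trans (ih (k+1) (by omega))
  exact (h1.trans h2.reachable).trans (h3 n 0 (by omega))

lemma not_reach_ray (n : ℕ) (x : α) :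
    ¬ ((glue T ray a₀ 0).deleteEdges {s(Sum.inr n, Sum.inr (n+1))}).Reachable
      (.inl x) (.inr (n+1)) := by
  intro h
  have key := reach_of_pseudoHom (H := (⊥ : SimpleGraph Bool))
      (Sum.elim (fun _ => false) fun k => decide (n+1 ≤ k)) ?_ h
  · rw [reachable_bot] at key; simp at key
  · rintro (p | p) (q | q) hpq <;> rw [deleteEdges_adj] at hpq
    · exact Or.inr rfl
    · obtain ⟨rfl, rfl⟩ := glue_adj_inl_inr.mp hpq.1
      simp
    · obtain ⟨rfl, rfl⟩ := glue_adj_inr_inl.mp hpq.1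
      simp
    · refine Or.inr ?_
      have hadj := glue_adj_inr_inr.mp hpq.1
      rw [ray_adj] at hadj
      have hne := hpq.2
      simp only [Set.mem_singleton_iff, Sym2.eq_iff, Sum.inr.injEq] at hne
      simp only [Sum.elim_inr, decide_eq_decide]
      omega
end

lemma contract_adj {V : Type} {G : SimpleGraph V} {u v : V} {a b : {x : V // x ≠ u}} :
    (contractEdge G u v).Adj a b ↔ a ≠ b ∧ (G.Adj a.val b.val ∨
      (a.val = v ∧ G.Adj u b.val) ∨ (b.val = v ∧ G.Adj u a.val)) := by
  simp only [contractEdge, fromRel_adj]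
  constructor
  · rintro ⟨h, h' | h'⟩
    · exact ⟨h, h'⟩
    · refine ⟨h, ?_⟩
      rcases h' with h' | h' | h'
      · exact Or.inl h'.symm
      · exact Or.inr (Or.inr h')
      · exact Or.inr (Or.inl h')
  · rintro ⟨h, h'⟩; exact ⟨h, Or.inl h'⟩

lemma cross_le {V : Type} [Fintype V] (G : SimpleGraph V) (u v : V) (huv : G.Adj u v)
    (hdeg : (G.neighborSet u).ncard ≤ 2) (A : Set V) :
    {e : Sym2 {x : V // x ≠ u} | e ∈ (contractEdge G u v).edgeSet ∧
        ∃ a b, e = s(a, b) ∧ (a : {x : V // x ≠ u}).val ∈ A ∧ b.val ∉ A}.ncard ≤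
    {e : Sym2 V | e ∈ G.edgeSet ∧ ∃ a b, e = s(a, b) ∧ a ∈ A ∧ b ∉ A}.ncard := by
  set V' := {x : V // x ≠ u}
  set val2 : Sym2 V' → Sym2 V := Sym2.map Subtype.val with hval2
  have hval2inj : Function.Injective val2 := Sym2.map.injective Subtype.val_injective
  set S' := {e : Sym2 V' | e ∈ (contractEdge G u v).edgeSet ∧
      ∃ a b, e = s(a, b) ∧ (a : V').val ∈ A ∧ b.val ∉ A} with hS'
  set S := {e : Sym2 V | e ∈ G.edgeSet ∧ ∃ a b, e = s(a, b) ∧ a ∈ A ∧ b ∉ A} with hS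
  set gen := {e ∈ S' | val2 e ∈ G.edgeSet} with hgen
  set nw := {e ∈ S' | val2 e ∉ G.edgeSet} with hnw
  set Snu := {e ∈ S | u ∉ e} with hSnu
  set Su := {e ∈ S | u ∈ e} with hSu
  -- new edges are s(v, w) with w a neighbor of u
  have hnew : ∀ e ∈ nw, ∃ w, G.Adj u w ∧ w ≠ v ∧ val2 e = s(v, w) ∧
      ((v ∈ A ∧ w ∉ A) ∨ (w ∈ A ∧ v ∉ A)) := by
    rintro e ⟨⟨he, a, b, rfl, ha, hb⟩, hne⟩
    have hmap : val2 s(a, b) = s(a.val, b.val) := by simp [hval2]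
    rw [hmap] at hne
    have hadj := contract_adj.mp ((contractEdge G u v).mem_edgeSet.mp he)
    have hvals : a.val ≠ b.val := fun hc => hadj.1 (Subtype.val_injective hc)
    rcases hadj.2 with h' | ⟨hav, hub⟩ | ⟨hbv, hua⟩
    · exact absurd (G.mem_edgeSet.mpr h') hne
    · exact ⟨b.val, hub, fun hc => hvals (hav.trans hc.symm), by rw [hmap, hav],
        Or.inl ⟨hav ▸ ha, hb⟩⟩
    · refine ⟨a.val, hua, fun hc => hvals (hc.trans hbv.symm), by rw [hmap, hbv, Sym2.eq_swap],
        Or.inr ⟨ha, hbv ▸ hb⟩⟩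
  have hnwss : nw.Subsingleton := by
    rintro e₁ h₁ e₂ h₂
    obtain ⟨w₁, hw₁, hw₁v, he₁, -⟩ := hnew e₁ h₁
    obtain ⟨w₂, hw₂, hw₂v, he₂, -⟩ := hnew e₂ h₂
    by_cases hw : w₁ = w₂
    · exact hval2inj (by rw [he₁, he₂, hw])
    · exfalso
      have hsub : ({v, w₁, w₂} : Set V) ⊆ G.neighborSet u := by
        rintro x (rfl | rfl | rfl)
        · exact huv
        · exact hw₁
        · exact hw₂
      have h3 : ({v, w₁, w₂} : Set V).ncard = 3 :=
        Set.ncard_eq_three.mpr ⟨v, w₁, w₂, fun h => hw₁v h.symm, fun h => hw₂v h.symm, hw, rfl⟩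
      have := Set.ncard_le_ncard hsub (Set.toFinite _)
      omega
  have hgenle : gen.ncard ≤ Snu.ncard := by
    refine Set.ncard_le_ncard_of_injOn val2 ?_ (fun x _ y _ h => hval2inj h) (Set.toFinite _)
    rintro e ⟨⟨he, a, b, rfl, ha, hb⟩, hge⟩
    have hmap : val2 s(a, b) = s(a.val, b.val) := by simp [hval2]
    refine ⟨⟨by rwa [hmap], a.val, b.val, hmap, ha, hb⟩, ?_⟩
    rw [hmap, Sym2.mem_iff]
    rintro (h | h) <;> [exact a.2 h.symm; exact b.2 h.symm]
  have hsplit' : S' = gen ∪ nw := by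
    ext e
    constructor
    · intro hm
      by_cases h : val2 e ∈ G.edgeSet
      · exact Or.inl ⟨hm, h⟩
      · exact Or.inr ⟨hm, h⟩
    · rintro (⟨hm, -⟩ | ⟨hm, -⟩) <;> exact hm
  have hle1 : S'.ncard ≤ gen.ncard + nw.ncard := hsplit' ▸ Set.ncard_union_le _ _
  rcases nw.eq_empty_or_nonempty with hnwe | ⟨e, he⟩
  · have : nw.ncard = 0 := by simp [hnwe]
    have hsub : Snu.ncard ≤ S.ncard := Set.ncard_le_ncard (fun e he => he.1) (Set.toFinite _)
    omega
  · have hnw1 : nw.ncard ≤ 1 := by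
      have : nw ⊆ {e} := fun x hx => hnwss hx he
      simpa using Set.ncard_le_ncard this (Set.toFinite _)
    have hSune : Su.Nonempty := by
      obtain ⟨w, hw, hwv, -, hside⟩ := hnew e he
      by_cases hu : u ∈ A
      · rcases hside with ⟨hv, hwA⟩ | ⟨hwA, hv⟩
        · exact ⟨s(u, w), ⟨G.mem_edgeSet.mpr hw, u, w, rfl, hu, hwA⟩, by simp⟩
        · exact ⟨s(u, v), ⟨G.mem_edgeSet.mpr huv, u, v, rfl, hu, hv⟩, by simp⟩
      · rcases hside with ⟨hv, hwA⟩ | ⟨hwA, hv⟩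
        · exact ⟨s(v, u), ⟨G.mem_edgeSet.mpr huv.symm, v, u, rfl, hv, hu⟩, by simp⟩
        · exact ⟨s(w, u), ⟨G.mem_edgeSet.mpr hw.symm, w, u, rfl, hwA, hu⟩, by simp⟩
    have hSu1 : 1 ≤ Su.ncard := (Set.ncard_pos (Set.toFinite _)).mpr hSune
    have hSsplit : S.ncard = Snu.ncard + Su.ncard := by
      rw [← Set.ncard_union_eq (by
        rw [Set.disjoint_left]; rintro x ⟨-, hx⟩ ⟨-, hx'⟩; exact hx hx') (Set.toFinite _)
        (Set.toFinite _)]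
      congr 1
      ext x
      constructor
      · intro hm
        by_cases h : u ∈ x
        · exact Or.inr ⟨hm, h⟩
        · exact Or.inl ⟨hm, h⟩
      · rintro (⟨hm, -⟩ | ⟨hm, -⟩) <;> exact hm
    omega

lemma crossWidth_zero_univ {V : Type} {G : SimpleGraph V} (C : CarvingDecomp G) {t₁ t₂ : C.τ}
    (h : C.side t₁ t₂ = Set.univ) : C.crossWidth t₁ t₂ = 0 := by
  have hset : {e : Sym2 V | e ∈ G.edgeSet ∧
      ∃ a b, e = s(a, b) ∧ a ∈ C.side t₁ t₂ ∧ b ∉ C.side t₁ t₂} = ∅ := by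
    ext e; simp [h]
  unfold CarvingDecomp.crossWidth
  rw [hset]
  simp

lemma crossWidth_zero_empty {V : Type} {G : SimpleGraph V} (C : CarvingDecomp G) {t₁ t₂ : C.τ}
    (h : C.side t₁ t₂ = ∅) : C.crossWidth t₁ t₂ = 0 := by
  have hset : {e : Sym2 V | e ∈ G.edgeSet ∧
      ∃ a b, e = s(a, b) ∧ a ∈ C.side t₁ t₂ ∧ b ∉ C.side t₁ t₂} = ∅ := by
    ext e; simp [h]
  unfold CarvingDecomp.crossWidth
  rw [hset]
  simp

lemma exists_contract_decomp {V : Type} [Fintype V] (G : SimpleGraph V) (u v : V)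
    (huv : G.Adj u v) (hdeg : (G.neighborSet u).ncard ≤ 2) (C : CarvingDecomp G) (w : ℕ)
    (hw : C.widthLE w) : ∃ C' : CarvingDecomp (contractEdge G u v), C'.widthLE w := by
  classical
  set ℓu : C.τ := (C.leafEquiv u).val with hℓu
  have hℓuleaf : ∃! s, C.tree.Adj ℓu s := (C.leafEquiv u).2
  have ha₀ : ∃ s, C.tree.Adj ℓu s := ⟨hℓuleaf.choose, hℓuleaf.choose_spec.1⟩
  have hT'tree : (glue C.tree ray ℓu 0).IsTree := glue_isTree C.isTree ray_isTree
  have hne : ∀ x : {x : V // x ≠ u}, (C.leafEquiv x.val).val ≠ ℓu := by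
    intro x hc
    exact x.2 (C.leafEquiv.injective (Subtype.ext hc) : x.val = u)
  let f : {x : V // x ≠ u} → {t : C.τ ⊕ ℕ // ∃! s, (glue C.tree ray ℓu 0).Adj t s} := fun x =>
    ⟨Sum.inl (C.leafEquiv x.val).val,
     (glue_ray_leaf ha₀ _).mpr ⟨_, rfl, hne x, (C.leafEquiv x.val).2⟩⟩
  have hbij : Function.Bijective f := by
    constructor
    · intro x y hxy
      have h1 : (Sum.inl (C.leafEquiv x.val).val : C.τ ⊕ ℕ) = Sum.inl (C.leafEquiv y.val).val :=
        congrArg Subtype.val hxy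
      have h2 : C.leafEquiv x.val = C.leafEquiv y.val := Subtype.ext (by simpa using h1)
      exact Subtype.ext (C.leafEquiv.injective h2)
    · rintro ⟨t, ht⟩
      obtain ⟨p, rfl, hpne, hpl⟩ := (glue_ray_leaf ha₀ t).mp ht
      refine ⟨⟨(C.leafEquiv.symm ⟨p, hpl⟩ : V), fun hc => hpne ?_⟩, ?_⟩
      · have : C.leafEquiv u = ⟨p, hpl⟩ := by rw [← hc, Equiv.apply_symm_apply]
        rw [hℓu, this]
      · apply Subtype.ext
        show (Sum.inl (C.leafEquiv (C.leafEquiv.symm ⟨p, hpl⟩ : _)).val : C.τ ⊕ ℕ) = Sum.inl p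
        rw [Equiv.apply_symm_apply]
  refine ⟨⟨C.τ ⊕ ℕ, glue C.tree ray ℓu 0, hT'tree, Equiv.ofBijective f hbij⟩, ?_⟩
  set C' : CarvingDecomp (contractEdge G u v) :=
    ⟨C.τ ⊕ ℕ, glue C.tree ray ℓu 0, hT'tree, Equiv.ofBijective f hbij⟩ with hC'
  have hleafval : ∀ x, (C'.leafEquiv x).val = Sum.inl (C.leafEquiv x.val).val := fun x => rfl
  rintro (t₁ | n) (t₂ | m) hadj
  · -- both in the original tree
    have htadj : C.tree.Adj t₁ t₂ := glue_adj_inl_inl.mp hadj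
    have hsideeq : C'.side (.inl t₁) (.inl t₂) =
        {x : {x : V // x ≠ u} | x.val ∈ C.side t₁ t₂} := by
      ext x
      show ((glue C.tree ray ℓu 0).deleteEdges {s(Sum.inl t₁, Sum.inl t₂)}).Reachable
          (C'.leafEquiv x).val (.inl t₁) ↔ x.val ∈ C.side t₁ t₂
      rw [hleafval, reach_inl_iff]
      exact Iff.rfl
    calc C'.crossWidth (.inl t₁) (.inl t₂) ≤ C.crossWidth t₁ t₂ := by
          unfold CarvingDecomp.crossWidth
          rw [hsideeq]
          exact cross_le G u v huv hdeg (C.side t₁ t₂)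
      _ ≤ w := hw t₁ t₂ htadj
  · -- bridge edge
    obtain ⟨rfl, rfl⟩ := glue_adj_inl_inr.mp hadj
    have hside : C'.side (.inl ℓu) (.inr 0) = Set.univ := by
      ext x
      simp only [Set.mem_univ, iff_true]
      show ((glue C.tree ray ℓu 0).deleteEdges {s(Sum.inl ℓu, Sum.inr 0)}).Reachable
          (C'.leafEquiv x).val (.inl ℓu)
      rw [hleafval]
      exact reach_bridge_univ C.isTree.isConnected _
    rw [crossWidth_zero_univ C' hside]
    exact Nat.zero_le w
  · -- bridge edge, reversed
    obtain ⟨rfl, rfl⟩ := glue_adj_inr_inl.mp hadj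
    have hside : C'.side (.inr 0) (.inl ℓu) = ∅ := by
      ext x
      simp only [Set.mem_empty_iff_false, iff_false]
      show ¬ ((glue C.tree ray ℓu 0).deleteEdges {s(Sum.inr 0, Sum.inl ℓu)}).Reachable
          (C'.leafEquiv x).val (.inr 0)
      rw [hleafval]
      exact not_reach_bridge _
    rw [crossWidth_zero_empty C' hside]
    exact Nat.zero_le w
  · -- within the ray
    have hray : ray.Adj n m := glue_adj_inr_inr.mp hadj
    rcases ray_adj.mp hray with rfl | rfl
    · -- m = n + 1
      have hside : C'.side (.inr n) (.inr (n + 1)) = Set.univ := by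
        ext x
        simp only [Set.mem_univ, iff_true]
        show ((glue C.tree ray ℓu 0).deleteEdges {s(Sum.inr n, Sum.inr (n + 1))}).Reachable
            (C'.leafEquiv x).val (.inr n)
        rw [hleafval]
        exact reach_ray_univ C.isTree.isConnected n _
      rw [crossWidth_zero_univ C' hside]
      exact Nat.zero_le w
    · -- n = m + 1
      have hswap : s(Sum.inr (m + 1), (Sum.inr m : C.τ ⊕ ℕ)) = s(Sum.inr m, Sum.inr (m + 1)) :=
        Sym2.eq_swap
      have hside : C'.side (.inr (m + 1)) (.inr m) = ∅ := by
        ext x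
        simp only [Set.mem_empty_iff_false, iff_false]
        show ¬ ((glue C.tree ray ℓu 0).deleteEdges
            {s(Sum.inr (m + 1), Sum.inr m)}).Reachable (C'.leafEquiv x).val (.inr (m + 1))
        rw [hleafval, hswap]
        exact not_reach_ray m _
      rw [crossWidth_zero_empty C' hside]
      exact Nat.zero_le w

lemma reach_transfer {α β : Type*} {G : SimpleGraph α} {H : SimpleGraph β}
    (f : α → β) (hf : ∀ x y, G.Adj x y → H.Reachable (f x) (f y))
    {x y : α} (h : G.Reachable x y) : H.Reachable (f x) (f y) := by
  obtain ⟨p⟩ := h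
  induction p with
  | nil => exact Reachable.refl _
  | cons ha p ih => exact (hf _ _ ha).trans ih

def subAttach {γ : Type*} (T : SimpleGraph γ) (t₁ t₂ : γ) : SimpleGraph (Bool ⊕ γ) :=
  SimpleGraph.fromRel fun x y => match x, y with
    | .inr p, .inr q => T.Adj p q ∧ s(p, q) ≠ s(t₁, t₂)
    | .inl m, .inr q => m = true ∧ (q = t₁ ∨ q = t₂)
    | .inl m, .inl m' => m = true ∧ m' = false
    | .inr _, .inl _ => False

section
variable {γ : Type*} {T : SimpleGraph γ} {t₁ t₂ : γ}

@[simp] lemma sub_adj_rr {p q : γ} :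
    (subAttach T t₁ t₂).Adj (.inr p) (.inr q) ↔ T.Adj p q ∧ s(p, q) ≠ s(t₁, t₂) := by
  simp only [subAttach, fromRel_adj]
  constructor
  · rintro ⟨-, ⟨h1, h2⟩ | ⟨h1, h2⟩⟩
    · exact ⟨h1, h2⟩
    · exact ⟨h1.symm, by rwa [Sym2.eq_swap]⟩
  · rintro ⟨h1, h2⟩
    exact ⟨by simpa using h1.ne, Or.inl ⟨h1, h2⟩⟩

@[simp] lemma sub_adj_lr {m : Bool} {q : γ} :
    (subAttach T t₁ t₂).Adj (.inl m) (.inr q) ↔ m = true ∧ (q = t₁ ∨ q = t₂) := by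
  simp only [subAttach, fromRel_adj]
  constructor
  · rintro ⟨-, h | h⟩ <;> [exact h; exact h.elim]
  · rintro ⟨rfl, h⟩
    exact ⟨by simp, Or.inl ⟨rfl, h⟩⟩

@[simp] lemma sub_adj_rl {m : Bool} {p : γ} :
    (subAttach T t₁ t₂).Adj (.inr p) (.inl m) ↔ m = true ∧ (p = t₁ ∨ p = t₂) := by
  rw [adj_comm, sub_adj_lr]

@[simp] lemma sub_adj_ll {m m' : Bool} :
    (subAttach T t₁ t₂).Adj (.inl m) (.inl m') ↔ m ≠ m' := by
  simp only [subAttach, fromRel_adj]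
  constructor
  · rintro ⟨h, -⟩; simpa using h
  · intro h
    refine ⟨by simpa using h, ?_⟩
    rcases m <;> rcases m' <;> simp_all

lemma subAttach_isTree (hT : T.IsTree) (h12 : T.Adj t₁ t₂) :
    (subAttach T t₁ t₂).IsTree := by
  have hbr : ∀ {x y : γ}, T.Adj x y → ¬(T \ fromEdgeSet {s(x, y)}).Reachable x y := by
    intro x y hxy
    exact isBridge_iff.mp ((isAcyclic_iff_forall_adj_isBridge.mp hT.IsAcyclic) hxy)
  constructor
  · -- connected
    have hrr : ∀ x y, T.Adj x y → (subAttach T t₁ t₂).Reachable (.inr x) (.inr y) := by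
      intro x y hxy
      by_cases hc : s(x, y) = s(t₁, t₂)
      · rcases Sym2.eq_iff.mp hc with ⟨rfl, rfl⟩ | ⟨rfl, rfl⟩
        · exact (Adj.reachable (sub_adj_rl.mpr ⟨rfl, Or.inl rfl⟩)).trans
            (Adj.reachable (sub_adj_lr.mpr ⟨rfl, Or.inr rfl⟩))
        · exact (Adj.reachable (sub_adj_rl.mpr ⟨rfl, Or.inr rfl⟩)).trans
            (Adj.reachable (sub_adj_lr.mpr ⟨rfl, Or.inl rfl⟩))
      · exact Adj.reachable (sub_adj_rr.mpr ⟨hxy, hc⟩)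
    have key : ∀ z : Bool ⊕ γ, (subAttach T t₁ t₂).Reachable z (.inr t₁) := by
      rintro (m | p)
      · have h1 : (subAttach T t₁ t₂).Reachable (.inl true) (.inr t₁) :=
          Adj.reachable (sub_adj_lr.mpr ⟨rfl, Or.inl rfl⟩)
        rcases m
        · exact (Adj.reachable (sub_adj_ll.mpr (by simp))).trans h1
        · exact h1
      · exact reach_transfer (Sum.inr : γ → Bool ⊕ γ) hrr (hT.isConnected p t₁)
    exact (connected_iff_exists_forall_reachable _).mpr ⟨.inr t₁, fun z => (key z).symm⟩
  · -- acyclic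
    have A1 : ∀ p q : γ, T.Adj p q → s(p, q) ≠ s(t₁, t₂) →
        ¬(subAttach T t₁ t₂ \ fromEdgeSet {s(Sum.inr p, Sum.inr q)}).Reachable
          (.inr p) (.inr q) := by
      intro p q hpq hne hreach
      refine hbr hpq (reach_of_pseudoHom (H := T \ fromEdgeSet {s(p, q)})
        (Sum.elim (fun _ => t₁) id) ?_ hreach)
      rintro (x | x) (y | y) hxy <;> rw [sdiff_single_adj] at hxy ⊢
      · exact Or.inr rfl
      · obtain ⟨rfl, hy⟩ := sub_adj_lr.mp hxy.1
        rcases hy with rfl | rfl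
        · exact Or.inr rfl
        · exact Or.inl ⟨h12, fun h => hne h.symm⟩
      · obtain ⟨rfl, hx⟩ := sub_adj_rl.mp hxy.1
        rcases hx with rfl | rfl
        · exact Or.inr rfl
        · exact Or.inl ⟨h12.symm, fun h => hne (Sym2.eq_swap.trans h).symm⟩
      · obtain ⟨ha, hb⟩ := sub_adj_rr.mp hxy.1
        refine Or.inl ⟨ha, fun hc => hxy.2 ?_⟩
        simpa using congrArg (Sym2.map (Sum.inr : γ → Bool ⊕ γ)) hc
    have A2 : ∀ q r : γ, s(q, r) = s(t₁, t₂) → T.Adj q r →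
        ¬(subAttach T t₁ t₂ \ fromEdgeSet {s(Sum.inl true, Sum.inr q)}).Reachable
          (.inl true) (.inr q) := by
      intro q r hqr hadjqr hreach
      have hqr' : (q = t₁ ∧ r = t₂) ∨ (q = t₂ ∧ r = t₁) := Sym2.eq_iff.mp hqr
      have hkey := reach_of_pseudoHom (H := T \ fromEdgeSet {s(t₁, t₂)})
        (Sum.elim (fun _ => r) id) ?_ hreach
      · have : ¬(T \ fromEdgeSet {s(t₁, t₂)}).Reachable r q := by
          rcases hqr' with ⟨rfl, rfl⟩ | ⟨rfl, rfl⟩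
          · exact fun h => hbr h12 h.symm
          · exact hbr h12
        exact this hkey
      · rintro (x | x) (y | y) hxy <;> rw [sdiff_single_adj] at hxy ⊢
        · exact Or.inr rfl
        · obtain ⟨rfl, hy⟩ := sub_adj_lr.mp hxy.1
          have hyq : y ≠ q := by
            intro hc
            exact hxy.2 (by rw [hc])
          have : y = r := by
            rcases hqr' with ⟨rfl, rfl⟩ | ⟨rfl, rfl⟩ <;> tauto
          exact Or.inr (by simp [this])
        · obtain ⟨rfl, hx⟩ := sub_adj_rl.mp hxy.1
          have hxq : x ≠ q := by
            intro hc
            exact hxy.2 (by rw [hc, Sym2.eq_swap])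
          have : x = r := by
            rcases hqr' with ⟨rfl, rfl⟩ | ⟨rfl, rfl⟩ <;> tauto
          exact Or.inr (by simp [this])
        · obtain ⟨ha, hb⟩ := sub_adj_rr.mp hxy.1
          exact Or.inl ⟨ha, hb⟩
    have A4 : ¬(subAttach T t₁ t₂ \ fromEdgeSet {s(Sum.inl true, Sum.inl false)}).Reachable
        (.inl true) (.inl false) := by
      intro hreach
      have hkey := reach_of_pseudoHom (H := (⊥ : SimpleGraph Bool))
        (Sum.elim (fun m => !m) (fun _ => false)) ?_ hreach
      · rw [reachable_bot] at hkey; simp at hkey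
      · rintro (x | x) (y | y) hxy <;> rw [sdiff_single_adj] at hxy
        · exfalso
          have hne := sub_adj_ll.mp hxy.1
          apply hxy.2
          rcases x <;> rcases y <;> simp_all [Sym2.eq_swap]
        · obtain ⟨rfl, -⟩ := sub_adj_lr.mp hxy.1
          exact Or.inr rfl
        · obtain ⟨rfl, -⟩ := sub_adj_rl.mp hxy.1
          exact Or.inr rfl
        · exact Or.inr rfl
    rw [isAcyclic_iff_forall_adj_isBridge]
    rintro (m | p) (m' | q) hadj <;> rw [isBridge_iff] <;> refine ?_
    · -- ll
      have hne := sub_adj_ll.mp hadj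
      rcases m <;> rcases m'
      · exact absurd rfl hne
      · intro h
        rw [show s((Sum.inl false : Bool ⊕ γ), Sum.inl true) =
          s(Sum.inl true, Sum.inl false) from Sym2.eq_swap] at h
        exact A4 h.symm
      · exact A4
      · exact absurd rfl hne
    · -- lr
      obtain ⟨rfl, hq⟩ := sub_adj_lr.mp hadj
      rcases hq with hq | hq <;> rw [hq]
      · exact A2 t₁ t₂ rfl h12
      · exact A2 t₂ t₁ Sym2.eq_swap h12.symm
    · -- rl
      obtain ⟨rfl, hp⟩ := sub_adj_rl.mp hadj
      intro h
      rw [show s((Sum.inr p : Bool ⊕ γ), Sum.inl true) =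
        s(Sum.inl true, Sum.inr p) from Sym2.eq_swap] at h
      rcases hp with hp | hp <;> rw [hp] at h
      · exact A2 t₁ t₂ rfl h12 h.symm
      · exact A2 t₂ t₁ Sym2.eq_swap h12.symm h.symm
    · -- rr
      obtain ⟨ha, hb⟩ := sub_adj_rr.mp hadj
      exact A1 p q ha hb

lemma subAttach_leaf (h12 : T.Adj t₁ t₂) (huniq : ∀ s, T.Adj t₁ s → s = t₂)
    (t : Bool ⊕ γ) :
    (∃! s, (subAttach T t₁ t₂).Adj t s) ↔
      (t = Sum.inl false ∨ ∃ p, t = Sum.inr p ∧ (∃! s, T.Adj p s)) := by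
  have h12' : t₁ ≠ t₂ := h12.ne
  cases t with
  | inl m =>
      rcases m
      · -- inl false : is a leaf
        simp only [eq_self_iff_true, true_or, iff_true]
        refine ⟨.inl true, sub_adj_ll.mpr (by simp), ?_⟩
        rintro (m' | q) hs
        · have := sub_adj_ll.mp hs
          rcases m' <;> simp_all
        · exact absurd (sub_adj_lr.mp hs).1 (by simp)
      · -- inl true : not a leaf
        simp only [reduceCtorEq, false_or]
        constructor
        · rintro ⟨s, hs, hu⟩
          exfalso
          have h1 : (subAttach T t₁ t₂).Adj (.inl true) (.inl false) := sub_adj_ll.mpr (by simp)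
          have h2 : (subAttach T t₁ t₂).Adj (.inl true) (.inr t₁) :=
            sub_adj_lr.mpr ⟨rfl, Or.inl rfl⟩
          have := (hu _ h1).trans (hu _ h2).symm
          simp at this
        · intro h
          exfalso
          revert h
          simp
  | inr p =>
      simp only [reduceCtorEq, Sum.inr.injEq, false_or]
      constructor
      · rintro ⟨s, hs, hu⟩
        refine ⟨p, rfl, ?_⟩
        by_cases hp1 : p = t₁
        · exact ⟨t₂, by rw [hp1]; exact h12, fun q hq => huniq q (by rwa [hp1] at hq)⟩
        · by_cases hp2 : p = t₂
          · refine ⟨t₁, by rw [hp2]; exact h12.symm, ?_⟩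
            intro q hq
            by_contra hq1
            have hadjq : (subAttach T t₁ t₂).Adj (.inr p) (.inr q) := by
              refine sub_adj_rr.mpr ⟨hq, ?_⟩
              intro hc
              rw [Sym2.eq_iff] at hc
              rcases hc with ⟨h1, h2⟩ | ⟨h1, h2⟩
              · exact hp1 h1
              · exact hq1 h2
            have hadjt : (subAttach T t₁ t₂).Adj (.inr p) (.inl true) :=
              sub_adj_rl.mpr ⟨rfl, Or.inr hp2⟩
            have := (hu _ hadjq).trans (hu _ hadjt).symm
            simp at this
          · cases s with
            | inl m => exact absurd ((sub_adj_rl.mp hs).2) (by tauto)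
            | inr q =>
                refine ⟨q, (sub_adj_rr.mp hs).1, fun q' hq' => ?_⟩
                have hne' : s(p, q') ≠ s(t₁, t₂) := by
                  intro hc
                  rw [Sym2.eq_iff] at hc
                  rcases hc with ⟨h1, -⟩ | ⟨h1, -⟩ <;> tauto
                have := hu _ (sub_adj_rr.mpr ⟨hq', hne'⟩)
                simpa using this
      · rintro ⟨p', rfl, hleaf⟩
        by_cases hp1 : p = t₁
        · refine ⟨.inl true, sub_adj_rl.mpr ⟨rfl, Or.inl hp1⟩, ?_⟩
          rintro (m | q) hs
          · simp [(sub_adj_rl.mp hs).1]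
          · obtain ⟨hq, hne⟩ := sub_adj_rr.mp hs
            exfalso
            apply hne
            have hq2 : q = t₂ := huniq q (by rwa [hp1] at hq)
            rw [hp1, hq2]
        · by_cases hp2 : p = t₂
          · obtain ⟨s₀, hs₀, hu₀⟩ := hleaf
            have ht1 : T.Adj p t₁ := by rw [hp2]; exact h12.symm
            have huniq2 : ∀ q, T.Adj p q → q = t₁ := fun q hq =>
              (hu₀ q hq).trans (hu₀ t₁ ht1).symm
            refine ⟨.inl true, sub_adj_rl.mpr ⟨rfl, Or.inr hp2⟩, ?_⟩
            rintro (m | q) hs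
            · simp [(sub_adj_rl.mp hs).1]
            · obtain ⟨hq, hne⟩ := sub_adj_rr.mp hs
              exfalso
              apply hne
              rw [huniq2 q hq, hp2, Sym2.eq_swap]
          · obtain ⟨q₀, hq₀, hu₀⟩ := hleaf
            have hne₀ : ∀ q, T.Adj p q → s(p, q) ≠ s(t₁, t₂) := by
              intro q hq hc
              rw [Sym2.eq_iff] at hc
              rcases hc with ⟨h1, -⟩ | ⟨h1, -⟩ <;> tauto
            refine ⟨.inr q₀, sub_adj_rr.mpr ⟨hq₀, hne₀ q₀ hq₀⟩, ?_⟩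
            rintro (m | q) hs
            · exact absurd ((sub_adj_rl.mp hs).2) (by tauto)
            · simpa using hu₀ q (sub_adj_rr.mp hs).1

end

lemma carving_back {V : Type} (G : SimpleGraph V) (u v : V) (huv : G.Adj u v)
    (C' : CarvingDecomp (contractEdge G u v)) : Nonempty (CarvingDecomp G) := by
  classical
  set x₀ : {x : V // x ≠ u} := ⟨v, huv.ne'⟩ with hx₀
  set ℓ : C'.τ := (C'.leafEquiv x₀).val with hℓ
  have hℓleaf : ∃! s, C'.tree.Adj ℓ s := (C'.leafEquiv x₀).2
  set t₂ : C'.τ := hℓleaf.choose with ht₂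
  have hadj12 : C'.tree.Adj ℓ t₂ := hℓleaf.choose_spec.1
  have huniq : ∀ s, C'.tree.Adj ℓ s → s = t₂ := hℓleaf.choose_spec.2
  have hTtree : (subAttach C'.tree ℓ t₂).IsTree := subAttach_isTree C'.isTree hadj12
  let g : V → {t : Bool ⊕ C'.τ // ∃! s, (subAttach C'.tree ℓ t₂).Adj t s} := fun x =>
    if h : x = u then ⟨.inl false, (subAttach_leaf hadj12 huniq _).mpr (Or.inl rfl)⟩
    else ⟨.inr (C'.leafEquiv ⟨x, h⟩).val,
      (subAttach_leaf hadj12 huniq _).mpr (Or.inr ⟨_, rfl, (C'.leafEquiv ⟨x, h⟩).2⟩)⟩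
  have hbij : Function.Bijective g := by
    constructor
    · intro x y hxy
      by_cases hx : x = u <;> by_cases hy : y = u
      · rw [hx, hy]
      · exfalso
        have := congrArg Subtype.val hxy
        simp only [g, dif_pos hx, dif_neg hy] at this
        exact absurd this (by simp)
      · exfalso
        have := congrArg Subtype.val hxy
        simp only [g, dif_pos hy, dif_neg hx] at this
        exact absurd this (by simp)
      · have := congrArg Subtype.val hxy
        simp only [g, dif_neg hx, dif_neg hy] at this
        have h2 : C'.leafEquiv ⟨x, hx⟩ = C'.leafEquiv ⟨y, hy⟩ :=
          Subtype.ext (by simpa using this)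
        have h3 := C'.leafEquiv.injective h2
        simpa using congrArg Subtype.val h3
    · rintro ⟨t, ht⟩
      rcases (subAttach_leaf hadj12 huniq t).mp ht with rfl | ⟨p, rfl, hp⟩
      · exact ⟨u, by simp [g]⟩
      · refine ⟨(C'.leafEquiv.symm ⟨p, hp⟩).val, ?_⟩
        have hxu : (C'.leafEquiv.symm ⟨p, hp⟩).val ≠ u := (C'.leafEquiv.symm ⟨p, hp⟩).2
        apply Subtype.ext
        show (g _).val = Sum.inr p
        simp only [g, dif_neg hxu]
        congr 1
        have : (⟨(C'.leafEquiv.symm ⟨p, hp⟩).val, hxu⟩ : {x : V // x ≠ u}) =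
            C'.leafEquiv.symm ⟨p, hp⟩ := Subtype.ext rfl
        rw [this, Equiv.apply_symm_apply]
  exact ⟨⟨Bool ⊕ C'.τ, subAttach C'.tree ℓ t₂, hTtree, Equiv.ofBijective g hbij⟩⟩

lemma widthLE_any {V : Type} [Fintype V] {G : SimpleGraph V} (C : CarvingDecomp G) :
    C.widthLE (Nat.card (Sym2 V)) := by
  intro t₁ t₂ _
  unfold CarvingDecomp.crossWidth
  calc _ ≤ (Set.univ : Set (Sym2 V)).ncard :=
        Set.ncard_le_ncard (Set.subset_univ _) (Set.toFinite _)
    _ = Nat.card (Sym2 V) := Set.ncard_univ _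

/-- contracting an edge one of whose endpoints has degree at most 2 does
not increase the carving width. -/
theorem carvingWidth_contract_degree_two
    {V : Type} [Fintype V] (G : SimpleGraph V) (u v : V)
    (huv : G.Adj u v) (hdeg : (G.neighborSet u).ncard ≤ 2) :
    carvingWidth (contractEdge G u v) ≤ carvingWidth G := by
  classical
  rcases Set.eq_empty_or_nonempty {w | ∃ C : CarvingDecomp G, C.widthLE w} with hSe | hSne
  · have hS' : {w | ∃ C' : CarvingDecomp (contractEdge G u v), C'.widthLE w} = ∅ := by
      rw [Set.eq_empty_iff_forall_notMem]
      rintro w ⟨C', -⟩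
      obtain ⟨C⟩ := carving_back G u v huv C'
      have : (Nat.card (Sym2 V)) ∈ {w | ∃ C : CarvingDecomp G, C.widthLE w} :=
        ⟨C, widthLE_any C⟩
      rw [hSe] at this
      exact this
    unfold carvingWidth
    rw [hS', hSe]
  · have hmem : sInf {w | ∃ C : CarvingDecomp G, C.widthLE w} ∈
        {w | ∃ C : CarvingDecomp G, C.widthLE w} := Nat.sInf_mem hSne
    obtain ⟨C, hC⟩ := hmem
    obtain ⟨C', hC'⟩ := exists_contract_decomp G u v huv hdeg C _ hC
    exact Nat.sInf_le ⟨C', hC'⟩
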